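/- Let Ω = C(ℝ_+, ℝ^d) be the space of continuous functions from ℝ_+ to ℝ^d for some d ≥ 1, let (F_t)_{t≥0} be the natural filtration of the canonical (coordinate) process Y (i.e. F_t = σ(Y_s, 0 ≤ s ≤ t)), and let F = σ(⋃_{t≥0} F_t). Then the filtered measurable space (Ω, F, (F_t)_{t≥0}) satisfies property (P). -/

import Mathlib

open MeasureTheory Set Filter
open scoped NNReal ENNReal

variable {Ω : Type*}

/-- The atom of a σ-algebra `m` at a point `x`: the intersection of all `m`-measurable
sets containing `x`. -/
def atomOf (m : MeasurableSpace Ω) (x : Ω) : Set Ω :=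
  ⋂₀ {B : Set Ω | MeasurableSet[m] B ∧ x ∈ B}

/-- Property (P) for a filtered measurable space `(Ω, σ(⋃ t, 𝓕 t), (𝓕 t))`:
(1) each `𝓕 t` is countably generated; (2) each `𝓕 t` is the σ-algebra of inverse
images of Borel sets under a surjection `π t` onto a Polish space, whose fibers are
contained in the atoms of `𝓕 t`; (3) every sequence of atoms `A n (ω n)` of `𝓕 n` with
all finite intersections nonempty has nonempty intersection. -/
def PropertyP (𝓕 : ℝ≥0 → MeasurableSpace Ω) : Prop :=
  (∀ t : ℝ≥0, ∃ S : Set (Set Ω), S.Countable ∧ 𝓕 t = MeasurableSpace.generateFrom S) ∧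
  (∀ t : ℝ≥0, ∃ (Ωt : Type) (τ : TopologicalSpace Ωt) (_ : @PolishSpace Ωt τ)
      (π : Ω → Ωt), Function.Surjective π ∧
      𝓕 t = MeasurableSpace.comap π (@borel Ωt τ) ∧
      ∀ B : Set Ω, MeasurableSet[𝓕 t] B → ∀ ω : Ω, π ω ∈ π '' B → ω ∈ B) ∧
  ∀ ω : ℕ → Ω,
    (∀ N : ℕ, (⋂ n ∈ Finset.range (N + 1), atomOf (𝓕 (n : ℝ≥0)) (ω n)).Nonempty) →
    (⋂ n : ℕ, atomOf (𝓕 (n : ℝ≥0)) (ω n)).Nonempty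

section AuxCM

lemma borel_cm_eq {K : Type} [TopologicalSpace K] [CompactSpace K] [LocallyCompactSpace K]
    [SecondCountableTopology K]
    {E : Type} [MetricSpace E] [MeasurableSpace E] [BorelSpace E] [SecondCountableTopology E]
    [CompleteSpace E] :
    borel C(K, E) = ⨆ x : K, MeasurableSpace.comap (fun g : C(K, E) => g x) ‹MeasurableSpace E› := by
  set M := ⨆ x : K, MeasurableSpace.comap (fun g : C(K, E) => g x) ‹MeasurableSpace E› with hM
  obtain ⟨D, hDc, hDd⟩ := TopologicalSpace.exists_countable_dense K
  have hcb : ∀ (g : C(K, E)) (r : ℝ), MeasurableSet[M] (Metric.closedBall g r) := by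
    intro g r
    rcases lt_or_ge r 0 with h | h
    · rw [Metric.closedBall_eq_empty.2 h]; exact @MeasurableSet.empty _ M
    · have heq : Metric.closedBall g r = ⋂ x ∈ D, (fun f : C(K, E) => f x) ⁻¹' Metric.closedBall (g x) r := by
        ext f
        simp only [Metric.mem_closedBall, Set.mem_iInter, Set.mem_preimage]
        constructor
        · intro hf x _
          exact (ContinuousMap.dist_le h).1 hf x
        · intro hf
          rw [ContinuousMap.dist_le h]
          intro x
          have hclosed : IsClosed {x : K | dist (f x) (g x) ≤ r} := by
            have : Continuous fun x : K => dist (f x) (g x) :=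
              (f.continuous.dist g.continuous)
            exact isClosed_le this continuous_const
          have : D ⊆ {x : K | dist (f x) (g x) ≤ r} := fun x hx => hf x hx
          have := hclosed.closure_subset_iff.2 this
          rw [hDd.closure_eq] at this
          exact this (Set.mem_univ x)
      rw [heq]
      refine MeasurableSet.biInter hDc fun x _ => ?_
      have : MeasurableSet[MeasurableSpace.comap (fun f : C(K, E) => f x) ‹MeasurableSpace E›]
          ((fun f : C(K, E) => f x) ⁻¹' Metric.closedBall (g x) r) :=
        ⟨Metric.closedBall (g x) r, measurableSet_closedBall, rfl⟩
      exact le_iSup (fun x : K => MeasurableSpace.comap (fun g : C(K, E) => g x) ‹MeasurableSpace E›) x _ this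
  have hball : ∀ (g : C(K, E)) (r : ℝ), MeasurableSet[M] (Metric.ball g r) := by
    intro g r
    have heq : Metric.ball g r = ⋃ n : ℕ, Metric.closedBall g (r - 1 / (n + 1)) := by
      ext f
      simp only [Metric.mem_ball, Set.mem_iUnion, Metric.mem_closedBall]
      constructor
      · intro hf
        obtain ⟨n, hn⟩ := exists_nat_one_div_lt (sub_pos.2 hf)
        exact ⟨n, by linarith⟩
      · rintro ⟨n, hn⟩
        have : (0:ℝ) < 1 / (n + 1) := by positivity
        linarith
    rw [heq]
    exact MeasurableSet.iUnion fun n => hcb g _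
  apply le_antisymm
  · have hbasis : TopologicalSpace.IsTopologicalBasis {s : Set C(K, E) | ∃ g r, s = Metric.ball g r} := by
      apply TopologicalSpace.isTopologicalBasis_of_isOpen_of_nhds
      · rintro s ⟨g, r, rfl⟩; exact Metric.isOpen_ball
      · intro f u hfu hu
        obtain ⟨ε, hε, hsub⟩ := Metric.isOpen_iff.1 hu f hfu
        exact ⟨Metric.ball f ε, ⟨f, ε, rfl⟩, Metric.mem_ball_self hε, hsub⟩
    rw [hbasis.borel_eq_generateFrom]
    refine MeasurableSpace.generateFrom_le ?_
    rintro s ⟨g, r, rfl⟩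
    exact hball g r
  · refine iSup_le fun x => ?_
    have : Measurable[borel C(K, E)] fun g : C(K, E) => g x := by
      letI : MeasurableSpace C(K, E) := borel C(K, E)
      haveI : BorelSpace C(K, E) := ⟨rfl⟩
      exact (continuous_eval_const x).measurable
    exact MeasurableSpace.comap_le_iff_le_map.2 this

variable {d : ℕ}

/-- The restriction map. -/
noncomputable def resMap (d : ℕ) (t : ℝ≥0) (ω : C(ℝ≥0, Fin d → ℝ)) :
    C(Set.Icc (0:ℝ≥0) t, Fin d → ℝ) := ω.restrict _

lemma resMap_surj (d : ℕ) (t : ℝ≥0) : Function.Surjective (resMap d t) := by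
  intro g
  refine ⟨g.comp ⟨fun s => ⟨min s t, ⟨zero_le, min_le_right _ _⟩⟩, ?_⟩, ?_⟩
  · exact Continuous.subtype_mk (continuous_id.min continuous_const) _
  · ext x
    simp only [resMap, ContinuousMap.restrict_apply, ContinuousMap.comp_apply,
      ContinuousMap.coe_mk]
    have hx : (⟨min (↑x) t, ⟨zero_le, min_le_right _ _⟩⟩ : Set.Icc (0:ℝ≥0) t) = x :=
      Subtype.ext (min_eq_left x.2.2)
    rw [hx]

lemma filtration_eq_comap (d : ℕ) (t : ℝ≥0) :
    (⨆ s ∈ Set.Iic t, MeasurableSpace.comap (fun ω : C(ℝ≥0, Fin d → ℝ) => ω s)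
      (inferInstance : MeasurableSpace (Fin d → ℝ)))
      = MeasurableSpace.comap (resMap d t) (borel C(Set.Icc (0:ℝ≥0) t, Fin d → ℝ)) := by
  rw [borel_cm_eq, MeasurableSpace.comap_iSup]
  have h1 : ∀ x : Set.Icc (0:ℝ≥0) t,
      (MeasurableSpace.comap (fun g : C(Set.Icc (0:ℝ≥0) t, Fin d → ℝ) => g x)
        (inferInstance : MeasurableSpace (Fin d → ℝ))).comap (resMap d t)
      = MeasurableSpace.comap (fun ω : C(ℝ≥0, Fin d → ℝ) => ω (x : ℝ≥0))
        (inferInstance : MeasurableSpace (Fin d → ℝ)) := by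
    intro x
    rw [MeasurableSpace.comap_comp]
    rfl
  simp only [h1]
  have h2 : Set.Iic t = Set.Icc (0:ℝ≥0) t := by
    ext s; simp [zero_le]
  rw [h2, iSup_subtype']

lemma atomOf_filtration_eq (d : ℕ) (t : ℝ≥0) (ω : C(ℝ≥0, Fin d → ℝ)) :
    atomOf (⨆ s ∈ Set.Iic t, MeasurableSpace.comap (fun ω : C(ℝ≥0, Fin d → ℝ) => ω s)
      (inferInstance : MeasurableSpace (Fin d → ℝ))) ω
      = {ω' : C(ℝ≥0, Fin d → ℝ) | ∀ s ≤ t, ω' s = ω s} := by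
  rw [filtration_eq_comap]
  apply le_antisymm
  · -- atom ⊆ agreement set
    intro ω' hω'
    have hsing : MeasurableSet[MeasurableSpace.comap (resMap d t)
        (borel C(Set.Icc (0:ℝ≥0) t, Fin d → ℝ))] (resMap d t ⁻¹' {resMap d t ω}) := by
      refine ⟨{resMap d t ω}, ?_, rfl⟩
      letI : MeasurableSpace C(Set.Icc (0:ℝ≥0) t, Fin d → ℝ) := borel _
      haveI : BorelSpace C(Set.Icc (0:ℝ≥0) t, Fin d → ℝ) := ⟨rfl⟩
      exact measurableSet_singleton _
    have hmem : ω' ∈ resMap d t ⁻¹' {resMap d t ω} :=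
      hω' _ ⟨hsing, by simp⟩
    intro s hs
    have := congrArg (fun g => g ⟨s, ⟨zero_le, hs⟩⟩) hmem
    simpa [resMap] using this
  · intro ω' hω'
    intro B hB
    obtain ⟨⟨C, _, rfl⟩, hωB⟩ := hB
    have : resMap d t ω' = resMap d t ω := by
      ext x
      simp only [resMap, ContinuousMap.restrict_apply]
      exact congrFun (hω' x x.2.2) _
    simpa [Set.mem_preimage, this] using hωB

end AuxCM

section Glue
variable {d : ℕ}
lemma glue (ω : ℕ → C(ℝ≥0, Fin d → ℝ))
    (hcompat : ∀ (n m : ℕ), n ≤ m → ∀ s : ℝ≥0, s ≤ (n:ℝ≥0) → ω n s = ω m s) :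
    ∃ g : C(ℝ≥0, Fin d → ℝ), ∀ (n : ℕ) (s : ℝ≥0), s ≤ (n:ℝ≥0) → g s = ω n s := by
  set f : ℝ≥0 → Fin d → ℝ := fun s => ω ⌈s⌉₊ s with hf
  have key : ∀ (n : ℕ) (s : ℝ≥0), s ≤ (n:ℝ≥0) → f s = ω n s := by
    intro n s hs
    have h1 : ⌈s⌉₊ ≤ n := Nat.ceil_le.2 hs
    exact hcompat ⌈s⌉₊ n h1 s (Nat.le_ceil s)
  have hcont : Continuous f := by
    rw [continuous_iff_continuousAt]
    intro s
    set n : ℕ := ⌈s⌉₊ + 1 with hn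
    have hsn : s < (n:ℝ≥0) := lt_of_le_of_lt (Nat.le_ceil s) (by exact_mod_cast lt_add_one _)
    have hev : f =ᶠ[nhds s] (ω n : ℝ≥0 → Fin d → ℝ) := by
      filter_upwards [Iio_mem_nhds hsn] with u hu
      exact key n u (le_of_lt hu)
    exact ((ω n).continuous.continuousAt).congr hev.symm
  exact ⟨⟨f, hcont⟩, key⟩
end Glue

/-- The space `C(ℝ₊, ℝ^d)` of continuous functions, equipped with the natural filtration
`𝓕 t = σ(Y s, s ≤ t)` of the canonical process `Y s ω = ω s`, satisfies property (P). -/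
theorem continuousMapSpace_propertyP (d : ℕ) (hd : 1 ≤ d) :
    PropertyP (Ω := C(ℝ≥0, Fin d → ℝ)) (fun t : ℝ≥0 =>
      ⨆ s ∈ Set.Iic t, MeasurableSpace.comap
        (fun ω : C(ℝ≥0, Fin d → ℝ) => ω s)
        (inferInstance : MeasurableSpace (Fin d → ℝ))) := by
  refine ⟨?_, ?_, ?_⟩
  · -- (1) countably generated
    intro t
    show ∃ S : Set (Set C(ℝ≥0, Fin d → ℝ)), S.Countable ∧
      (⨆ s ∈ Set.Iic t, MeasurableSpace.comap (fun ω : C(ℝ≥0, Fin d → ℝ) => ω s)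
        (inferInstance : MeasurableSpace (Fin d → ℝ))) = MeasurableSpace.generateFrom S
    rw [filtration_eq_comap d t,
      (TopologicalSpace.isBasis_countableBasis C(Set.Icc (0:ℝ≥0) t, Fin d → ℝ)).borel_eq_generateFrom,
      MeasurableSpace.comap_generateFrom]
    exact ⟨_, (TopologicalSpace.countable_countableBasis _).image _, rfl⟩
  · -- (2) Polish space and surjection
    intro t
    refine ⟨C(Set.Icc (0:ℝ≥0) t, Fin d → ℝ), inferInstance, inferInstance, resMap d t,
      resMap_surj d t, filtration_eq_comap d t, ?_⟩
    intro B hB ωx hωx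
    have hB' : MeasurableSet[MeasurableSpace.comap (resMap d t)
        (borel C(Set.Icc (0:ℝ≥0) t, Fin d → ℝ))] B := by
      rw [← filtration_eq_comap d t]; exact hB
    obtain ⟨C, -, rfl⟩ := hB' 
    obtain ⟨ω', hω'B, hω'⟩ := hωx
    rw [Set.mem_preimage, ← hω']
    exact hω'B
  · -- (3) atoms
    intro ω hω
    have hcompat : ∀ (n m : ℕ), n ≤ m → ∀ s : ℝ≥0, s ≤ (n:ℝ≥0) → ω n s = ω m s := by
      intro n m hnm s hs
      obtain ⟨η, hη⟩ := hω m
      simp only [Set.mem_iInter, Finset.mem_range] at hη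
      have h1 := hη n (by omega)
      have h2 := hη m (by omega)
      rw [atomOf_filtration_eq] at h1 h2
      rw [← h1 s hs]
      exact h2 s (hs.trans (by exact_mod_cast hnm))
    obtain ⟨g, hg⟩ := glue ω hcompat
    refine ⟨g, ?_⟩
    simp only [Set.mem_iInter]
    intro n
    rw [atomOf_filtration_eq]
    intro s hs
    exact hg n s hs
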